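/- arXiv:1511.08903 — 2 statements merged into one kernel-verified Lean document; each statement's English description precedes it below -/
import Mathlib

section
/- Let φ : ℕ → (0,∞) be monotonically increasing with φ(n) → ∞ as n → ∞. If limsup_{n→∞} n/φ(n) = +∞, then the set E_max^φ = {x ∈ [0,1] : liminf_{n→∞} r_n(x)/φ(n) = 0 and limsup_{n→∞} r_n(x)/φ(n) = +∞} has Hausdorff dimension 1. -/
open Filter MeasureTheory Set

open Topology
open scoped NNReal ENNReal

/-- The `k`-th binary digit (for `k ≥ 1`) of a real number `x`,
namely `x_k = ⌊x * 2^k⌋ mod 2`, so that `x = Σ_{k ≥ 1} x_k / 2^k` for `x ∈ [0,1)`. -/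
noncomputable def dyadicDigit (x : ℝ) (k : ℕ) : ℕ :=
  ⌊x * 2 ^ k⌋.toNat % 2

/-- value of a 1-indexed digit sequence -/
noncomputable def dval (c : ℕ → ℕ) : ℝ := ∑' i : ℕ, (c (i+1) : ℝ) / 2^(i+1)

lemma hgeo1 : Summable (fun i : ℕ => ((1:ℝ)/2)^(i+1)) :=
  (summable_nat_add_iff 1).mpr summable_geometric_two

lemma hgeo1_tsum : ∑' i : ℕ, ((1:ℝ)/2)^(i+1) = 1 := by
  have h : (fun i : ℕ => ((1:ℝ)/2)^(i+1)) = fun n : ℕ => 1/2/2^n := by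
    ext i
    rw [div_pow, one_pow, pow_succ, div_div]
    ring_nf
  rw [h]
  exact tsum_geometric_two' 1

lemma dterm_le {c : ℕ → ℕ} (hc1 : ∀ p, c p ≤ 1) (i : ℕ) (p : ℕ) :
    (c p : ℝ) / 2^(i+1) ≤ ((1:ℝ)/2)^(i+1) := by
  rw [div_pow, one_pow]
  apply div_le_div_of_nonneg_right ?_ (by positivity)
  exact_mod_cast hc1 p

lemma dterm_nonneg (c : ℕ → ℕ) (i p : ℕ) : (0:ℝ) ≤ (c p : ℝ) / 2^(i+1) := by positivity

lemma dsummable {c : ℕ → ℕ} (hc1 : ∀ p, c p ≤ 1) :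
    Summable (fun i : ℕ => (c (i+1) : ℝ) / 2^(i+1)) :=
  Summable.of_nonneg_of_le (fun i => dterm_nonneg c i _) (fun i => dterm_le hc1 i _) hgeo1

/-- tail of a digit sequence after position k -/
noncomputable def dtail (c : ℕ → ℕ) (k : ℕ) : ℝ := ∑' i : ℕ, (c (k+i+1) : ℝ) / 2^(i+1)

lemma dsummable_tail {c : ℕ → ℕ} (hc1 : ∀ p, c p ≤ 1) (k : ℕ) :
    Summable (fun i : ℕ => (c (k+i+1) : ℝ) / 2^(i+1)) :=
  Summable.of_nonneg_of_le (fun i => dterm_nonneg c i _) (fun i => dterm_le hc1 i _) hgeo1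

lemma dtail_nonneg {c : ℕ → ℕ} (k : ℕ) : 0 ≤ dtail c k :=
  tsum_nonneg (fun i => by positivity)

lemma dtail_le_one {c : ℕ → ℕ} (hc1 : ∀ p, c p ≤ 1) (k : ℕ) : dtail c k ≤ 1 := by
  rw [← hgeo1_tsum]
  exact Summable.tsum_le_tsum (fun i => dterm_le hc1 i _) (dsummable_tail hc1 k) hgeo1

lemma geo_sum (K : ℕ) : ∑ i ∈ Finset.range K, ((1:ℝ)/2)^(i+1) = 1 - (1/2)^K := by
  induction K with
  | zero => simp
  | succ n ih => rw [Finset.sum_range_succ, ih]; ring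

lemma dtail_lt_one {c : ℕ → ℕ} (hc1 : ∀ p, c p ≤ 1)
    (hc0 : ∀ N, ∃ p, N ≤ p ∧ c p = 0) (k : ℕ) : dtail c k < 1 := by
  obtain ⟨z, hz, hcz⟩ := hc0 (k+1)
  set w := z - (k+1) with hw
  have hzw : z = k + w + 1 := by omega
  have hite : Summable (fun i : ℕ => if i = w then ((1:ℝ)/2)^(w+1) else 0) := by
    apply summable_of_ne_finset_zero (s := {w})
    intro i hi
    simp only [Finset.mem_singleton] at hi
    simp [hi]
  have hle : dtail c k ≤ ∑' i : ℕ, (((1:ℝ)/2)^(i+1) - if i = w then ((1:ℝ)/2)^(w+1) else 0) := by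
    apply Summable.tsum_le_tsum _ (dsummable_tail hc1 k) (hgeo1.sub hite)
    intro i
    by_cases hi : i = w
    · subst hi
      rw [← hzw, hcz]
      simp
    · simp only [hi, if_false, sub_zero]
      exact dterm_le hc1 i _
  have heq : (∑' i : ℕ, (((1:ℝ)/2)^(i+1) - if i = w then ((1:ℝ)/2)^(w+1) else 0))
      = 1 - (1/2)^(w+1) := by
    rw [Summable.tsum_sub hgeo1 hite, hgeo1_tsum, tsum_ite_eq]
  rw [heq] at hle
  have : (0:ℝ) < (1/2)^(w+1) := by positivity
  linarith

/-- partial (head) sum of digits, as a natural number: `S c k = Σ_{j<k} c (j+1) 2^(k-1-j)` -/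
def dhead (c : ℕ → ℕ) (k : ℕ) : ℕ := ∑ j ∈ Finset.range k, c (j+1) * 2^(k-1-j)

lemma dval_mul_pow {c : ℕ → ℕ} (hc1 : ∀ p, c p ≤ 1) (k : ℕ) :
    dval c * 2^k = (dhead c k : ℝ) + dtail c k := by
  have hsplit := Summable.sum_add_tsum_nat_add (f := fun i : ℕ => (c (i+1):ℝ)/2^(i+1)) k (dsummable hc1)
  rw [dval, ← hsplit, add_mul, Finset.sum_mul]
  congr 1
  · rw [dhead, Nat.cast_sum]
    apply Finset.sum_congr rfl
    intro j hj
    simp only [Finset.mem_range] at hj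
    push_cast
    rw [div_mul_eq_mul_div, div_eq_iff (by positivity), mul_assoc, ← pow_add]
    congr 2
    omega
  · rw [← tsum_mul_right, dtail]
    apply tsum_congr
    intro i
    rw [show k + i + 1 = i + k + 1 by omega, div_mul_eq_mul_div,
      div_eq_div_iff (by positivity) (by positivity), mul_assoc, ← pow_add]
    congr 2
    omega

lemma dval_floor {c : ℕ → ℕ} (hc1 : ∀ p, c p ≤ 1)
    (hc0 : ∀ N, ∃ p, N ≤ p ∧ c p = 0) (k : ℕ) :
    ⌊dval c * 2^k⌋ = (dhead c k : ℤ) := by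
  rw [dval_mul_pow hc1 k, Int.floor_eq_iff]
  push_cast
  constructor
  · linarith [dtail_nonneg (c := c) k]
  · linarith [dtail_lt_one hc1 hc0 k]

lemma dhead_succ (c : ℕ → ℕ) (k : ℕ) : dhead c (k+1) = 2 * dhead c k + c (k+1) := by
  rw [dhead, dhead, Finset.sum_range_succ, Finset.mul_sum]
  congr 1
  · apply Finset.sum_congr rfl
    intro j hj
    simp only [Finset.mem_range] at hj
    have : k + 1 - 1 - j = (k - 1 - j) + 1 := by omega
    rw [this, pow_succ]
    ring
  · simp

lemma dval_digit {c : ℕ → ℕ} (hc1 : ∀ p, c p ≤ 1)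
    (hc0 : ∀ N, ∃ p, N ≤ p ∧ c p = 0) (k : ℕ) :
    dyadicDigit (dval c) (k+1) = c (k+1) := by
  rw [dyadicDigit, dval_floor hc1 hc0 (k+1)]
  rw [Int.toNat_natCast, dhead_succ]
  have := hc1 (k+1)
  omega

lemma dval_nonneg {c : ℕ → ℕ} : 0 ≤ dval c := tsum_nonneg (fun i => by positivity)

lemma dval_lt_one {c : ℕ → ℕ} (hc1 : ∀ p, c p ≤ 1)
    (hc0 : ∀ N, ∃ p, N ≤ p ∧ c p = 0) : dval c < 1 := by
  have := dval_mul_pow hc1 0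
  simp only [pow_zero, mul_one, dhead, Finset.range_zero, Finset.sum_empty, Nat.cast_zero,
    zero_add] at this
  rw [this]
  exact dtail_lt_one hc1 hc0 0

section ydigits

variable {y : ℝ}

lemma ydig_le_one (y : ℝ) (k : ℕ) : dyadicDigit y k ≤ 1 := by
  have := Nat.mod_lt (⌊y * 2^k⌋.toNat) (show 0 < 2 by norm_num)
  rw [dyadicDigit]
  omega

lemma yfloor_step (hy0 : 0 ≤ y) (k : ℕ) :
    ⌊y * 2^(k+1)⌋ = 2*⌊y * 2^k⌋ + (dyadicDigit y (k+1) : ℤ) := by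
  have ht : y * 2^(k+1) = 2 * (y * 2^k) := by ring
  have h0 : (0:ℤ) ≤ ⌊y * 2^k⌋ := Int.floor_nonneg.mpr (mul_nonneg hy0 (by positivity))
  have h1 : 2*⌊y * 2^k⌋ ≤ ⌊y * 2^(k+1)⌋ := by
    rw [ht]; apply Int.le_floor.mpr; push_cast; linarith [Int.floor_le (y * 2^k)]
  have h2 : ⌊y * 2^(k+1)⌋ < 2*⌊y * 2^k⌋ + 2 := by
    rw [ht]; apply Int.floor_lt.mpr; push_cast; linarith [Int.lt_floor_add_one (y * 2^k)]
  rw [dyadicDigit]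
  omega

lemma ypartial (hy0 : 0 ≤ y) (hy1 : y < 1) (k : ℕ) :
    ∑ i ∈ Finset.range k, (dyadicDigit y (i+1) : ℝ)/2^(i+1) = (⌊y*2^k⌋.toNat : ℝ)/2^k := by
  induction k with
  | zero =>
    have : ⌊y⌋ = 0 := Int.floor_eq_zero_iff.mpr ⟨hy0, hy1⟩
    simp [this]
  | succ n ih =>
    have h0 : (0:ℤ) ≤ ⌊y * 2^n⌋ := Int.floor_nonneg.mpr (mul_nonneg hy0 (by positivity))
    have h0' : (0:ℤ) ≤ ⌊y * 2^(n+1)⌋ := Int.floor_nonneg.mpr (mul_nonneg hy0 (by positivity))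
    have hstep := yfloor_step hy0 n
    have hcast : (⌊y*2^(n+1)⌋.toNat : ℝ) = 2*(⌊y*2^n⌋.toNat:ℝ) + (dyadicDigit y (n+1):ℝ) := by
      have : (⌊y*2^(n+1)⌋.toNat : ℤ) = 2 * (⌊y*2^n⌋.toNat : ℤ) + (dyadicDigit y (n+1) : ℤ) := by
        rw [Int.toNat_of_nonneg h0, Int.toNat_of_nonneg h0']
        exact hstep
      exact_mod_cast this
    rw [Finset.sum_range_succ, ih, hcast, pow_succ]
    field_simp

lemma ypartial_le (hy0 : 0 ≤ y) (hy1 : y < 1) (k : ℕ) :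
    ∑ i ∈ Finset.range k, (dyadicDigit y (i+1) : ℝ)/2^(i+1) ≤ y ∧
    y < ∑ i ∈ Finset.range k, (dyadicDigit y (i+1) : ℝ)/2^(i+1) + (1/2)^k := by
  rw [ypartial hy0 hy1 k]
  have h0 : (0:ℤ) ≤ ⌊y * 2^k⌋ := Int.floor_nonneg.mpr (mul_nonneg hy0 (by positivity))
  have hfl : (⌊y*2^k⌋.toNat : ℝ) = (⌊y*2^k⌋ : ℝ) := by exact_mod_cast Int.toNat_of_nonneg h0
  have h2 : (0:ℝ) < 2^k := by positivity
  constructor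
  · rw [hfl, div_le_iff₀ h2]
    exact Int.floor_le _
  · rw [hfl, div_add' _ _ _ (ne_of_gt h2), lt_div_iff₀ h2]
    have := Int.lt_floor_add_one (y * 2^k)
    have hp : (1/2:ℝ)^k * 2^k = 1 := by
      rw [div_pow, one_pow, div_mul_cancel₀]
      positivity
    nlinarith

lemma ydig_zero (hy0 : 0 ≤ y) (hy1 : y < 1) : ∀ N, ∃ p, N ≤ p ∧ dyadicDigit y p = 0 := by
  intro N
  by_contra h
  push_neg at h
  have hone : ∀ p, N ≤ p → dyadicDigit y p = 1 := fun p hp => by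
    have h1 := ydig_le_one y p
    have h2 := h p hp
    omega
  obtain ⟨hPA, hylt⟩ := ypartial_le hy0 hy1 N
  set P : ℕ → ℝ := fun k => ∑ i ∈ Finset.range k, (dyadicDigit y (i+1) : ℝ)/2^(i+1) with hP
  set δ := P N + (1/2:ℝ)^N - y with hδ
  have hδpos : 0 < δ := by simp only [hδ]; linarith
  obtain ⟨K0, hK0⟩ := exists_pow_lt_of_lt_one hδpos (show (1/2:ℝ) < 1 by norm_num)
  set K := max K0 N with hK
  have hKN : N ≤ K := le_max_right _ _
  have hsplit : P K = P N + ∑ i ∈ Finset.Ico N K, (dyadicDigit y (i+1) : ℝ)/2^(i+1) := by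
    rw [hP]
    exact (Finset.sum_range_add_sum_Ico _ hKN).symm
  have hIco : ∑ i ∈ Finset.Ico N K, (dyadicDigit y (i+1) : ℝ)/2^(i+1)
      = (1/2:ℝ)^N - (1/2)^K := by
    have : ∀ i ∈ Finset.Ico N K, (dyadicDigit y (i+1) : ℝ)/2^(i+1) = ((1:ℝ)/2)^(i+1) := by
      intro i hi
      simp only [Finset.mem_Ico] at hi
      rw [hone (i+1) (by omega)]
      rw [div_pow, one_pow]
      norm_num
    rw [Finset.sum_congr rfl this]
    have := Finset.sum_range_add_sum_Ico (fun i => ((1:ℝ)/2)^(i+1)) hKN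
    rw [geo_sum, geo_sum] at this
    linarith
  have hPKy := (ypartial_le hy0 hy1 K).1
  have hKK0 : (1/2:ℝ)^K ≤ (1/2)^K0 :=
    pow_le_pow_of_le_one (by norm_num) (by norm_num) (le_max_left _ _)
  have hPK : P K ≤ y := hPKy
  rw [hsplit, hIco] at hPK
  simp only [hδ] at hK0
  linarith

lemma ydval (hy0 : 0 ≤ y) (hy1 : y < 1) : dval (fun k => dyadicDigit y k) = y := by
  have hsum := dsummable (c := fun k => dyadicDigit y k) (fun p => ydig_le_one y p)
  have htend : Tendsto (fun k => ∑ i ∈ Finset.range k, (dyadicDigit y (i+1) : ℝ)/2^(i+1))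
      atTop (𝓝 y) := by
    rw [tendsto_iff_dist_tendsto_zero]
    apply squeeze_zero (fun n => dist_nonneg) (g := fun k => (1/2:ℝ)^k) (fun k => ?_)
      (tendsto_pow_atTop_nhds_zero_of_lt_one (by norm_num) (by norm_num))
    obtain ⟨hle, hlt⟩ := ypartial_le hy0 hy1 k
    rw [Real.dist_eq, abs_of_nonpos (by linarith)]
    linarith
  exact ((hsum.hasSum_iff_tendsto_nat).mpr htend).tsum_eq

end ydigits

lemma dval_close {c c' : ℕ → ℕ} (hc1 : ∀ p, c p ≤ 1) (hc1' : ∀ p, c' p ≤ 1)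
    {F : ℕ} (hagree : ∀ j < F, c (j+1) = c' (j+1)) :
    |dval c - dval c'| ≤ (1/2:ℝ)^F := by
  have hh : dhead c F = dhead c' F :=
    Finset.sum_congr rfl (fun j hj => by rw [hagree j (Finset.mem_range.mp hj)])
  have hhr : (dhead c F : ℝ) = (dhead c' F : ℝ) := by exact_mod_cast hh
  have e1 := dval_mul_pow hc1 F
  have e2 := dval_mul_pow hc1' F
  have h2 : (0:ℝ) < 2^F := by positivity
  have hp : (1/2:ℝ)^F * 2^F = 1 := by
    rw [div_pow, one_pow, div_mul_cancel₀]
    positivity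
  have t1 := dtail_nonneg (c:=c) F
  have t2 := dtail_le_one hc1 F
  have t3 := dtail_nonneg (c:=c') F
  have t4 := dtail_le_one hc1' F
  rw [abs_le]
  constructor <;> nlinarith

lemma geo_sum_int (T : ℕ) : ∑ t ∈ Finset.range T, (2:ℤ)^t = 2^T - 1 := by
  induction T with
  | zero => simp
  | succ e ih => rw [Finset.sum_range_succ, ih]; ring

lemma geo_Ico (a : ℕ) : ∀ d : ℕ, ∑ j ∈ Finset.Ico a (a+d), (2:ℤ)^(a+d-j) = 2^(d+1) - 2 := by
  intro d
  induction d with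
  | zero => simp
  | succ e ih =>
    rw [show a+(e+1) = (a+e)+1 by ring, Finset.sum_Ico_succ_top (by omega)]
    have hc : ∀ j ∈ Finset.Ico a (a+e), (2:ℤ)^(a+e+1-j) = 2 * 2^(a+e-j) := by
      intro j hj
      simp only [Finset.mem_Ico] at hj
      rw [show a+e+1-j = (a+e-j)+1 by omega, pow_succ]
      ring
    rw [Finset.sum_congr rfl hc, ← Finset.mul_sum, ih, show a+e+1-(a+e) = 1 by omega]
    ring

lemma dval_sep {c c' : ℕ → ℕ} (hc1 : ∀ p, c p ≤ 1) (hc1' : ∀ p, c' p ≤ 1)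
    (hc0 : ∀ N, ∃ p, N ≤ p ∧ c p = 0) (hc0' : ∀ N, ∃ p, N ≤ p ∧ c' p = 0)
    {n q : ℕ} (hn : 1 ≤ n) (hnq : n < q)
    (hagree : ∀ p < n, c p = c' p) (hcn : c n = 1) (hcn' : c' n = 0) (hq : c q = c' q) :
    dval c' + (1/2:ℝ)^q ≤ dval c := by
  set f : ℕ → ℤ := fun j => (c (j+1) : ℤ) * 2^(q-1-j) with hf
  set g : ℕ → ℤ := fun j => (c' (j+1) : ℤ) * 2^(q-1-j) with hg
  have hD : (dhead c' q : ℤ) + 2 ≤ (dhead c q : ℤ) := by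
    have hfs : (dhead c q : ℤ) = ∑ j ∈ Finset.range q, f j := by
      rw [dhead]
      push_cast
      rfl
    have hgs : (dhead c' q : ℤ) = ∑ j ∈ Finset.range q, g j := by
      rw [dhead]
      push_cast
      rfl
    have hsplitf : ∀ (F : ℕ → ℤ), ∑ j ∈ Finset.range q, F j
        = ∑ j ∈ Finset.range (n-1), F j + F (n-1) + ∑ j ∈ Finset.Ico n q, F j := by
      intro F
      have h1 : ∑ j ∈ Finset.range n, F j = ∑ j ∈ Finset.range (n-1), F j + F (n-1) := by
        conv_lhs => rw [show n = (n-1)+1 by omega]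
        rw [Finset.sum_range_succ]
      rw [← Finset.sum_range_add_sum_Ico F (le_of_lt hnq), h1]
    have hhead : ∑ j ∈ Finset.range (n-1), f j = ∑ j ∈ Finset.range (n-1), g j := by
      apply Finset.sum_congr rfl
      intro j hj
      simp only [Finset.mem_range] at hj
      simp only [hf, hg, hagree (j+1) (by omega)]
    have hfn : f (n-1) = 2^(q-n) := by
      simp only [hf, show n-1+1 = n by omega, hcn, show q-1-(n-1) = q-n by omega]
      ring
    have hgn : g (n-1) = 0 := by
      simp only [hg, show n-1+1 = n by omega, hcn']
      ring
    have hIco : ∑ j ∈ Finset.Ico n q, g j - ∑ j ∈ Finset.Ico n q, f j ≤ 2^(q-n) - 2 := by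
      have hq1 : q = (q-1)+1 := by omega
      have hsp : ∀ (F : ℕ → ℤ), ∑ j ∈ Finset.Ico n q, F j
          = ∑ j ∈ Finset.Ico n (q-1), F j + F (q-1) := by
        intro F
        conv_lhs => rw [hq1]
        rw [Finset.sum_Ico_succ_top (by omega)]
      have hlast : g (q-1) - f (q-1) = 0 := by
        simp only [hf, hg, show q-1+1 = q by omega, hq]
        ring
      have hterm : ∀ j ∈ Finset.Ico n (q-1), g j - f j ≤ (2:ℤ)^(q-1-j) := by
        intro j hj
        simp only [hf, hg]
        have h1 : (c' (j+1) : ℤ) ≤ 1 := by exact_mod_cast hc1' (j+1)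
        have h2 : (0:ℤ) ≤ (c (j+1) : ℤ) := by positivity
        nlinarith [pow_pos (show (0:ℤ) < 2 by norm_num) (q-1-j)]
      have hgeo := geo_Ico n (q-1-n)
      rw [show n + (q-1-n) = q-1 by omega] at hgeo
      have hsum : ∑ j ∈ Finset.Ico n (q-1), (g j - f j) ≤ 2^(q-n) - 2 := by
        calc ∑ j ∈ Finset.Ico n (q-1), (g j - f j) ≤ ∑ j ∈ Finset.Ico n (q-1), (2:ℤ)^(q-1-j) :=
              Finset.sum_le_sum hterm
          _ = 2^(q-1-n+1) - 2 := hgeo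
          _ = 2^(q-n) - 2 := by rw [show q-1-n+1 = q-n by omega]
      rw [hsp g, hsp f]
      rw [Finset.sum_sub_distrib] at hsum
      linarith
    rw [hfs, hgs, hsplitf f, hsplitf g]
    have hpow : (2:ℤ) ≤ 2^(q-n) := by
      calc (2:ℤ) = 2^1 := by ring
        _ ≤ 2^(q-n) := pow_le_pow_right₀ (by norm_num) (by omega)
    linarith [hhead, hfn, hgn, hIco]
  have e1 := dval_mul_pow hc1 q
  have e2 := dval_mul_pow hc1' q
  have h2 : (0:ℝ) < 2^q := by positivity
  have hp : (1/2:ℝ)^q * 2^q = 1 := by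
    rw [div_pow, one_pow, div_mul_cancel₀]
    positivity
  have hDr : (dhead c' q : ℝ) + 2 ≤ (dhead c q : ℝ) := by exact_mod_cast hD
  have key : (dval c' + (1/2:ℝ)^q) * 2^q ≤ dval c * 2^q := by
    rw [add_mul, e1, e2, hp]
    linarith [dtail_nonneg (c:=c) q, dtail_lt_one hc1' hc0' q]
  exact (mul_le_mul_iff_of_pos_right h2).mp key

/-- A good sequence of block positions for the construction. -/
structure GoodSeq (φ : ℕ → ℝ) (m : ℕ) : Type where
  ns : ℕ → ℕ
  ns0 : ns 0 = 0
  h1 : ∀ k : ℕ, 1 ≤ k → 8*(m:ℝ)*((k:ℝ)+1) * φ (ns k) ≤ (ns k : ℝ)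
  h2 : ∀ k, 1 ≤ k → 8*m*(ns (k-1) + 1) ≤ ns k
  h3 : ∀ k, 1 ≤ k → ∀ p : ℕ, ns k ≤ 2*p →
    (k:ℝ) * ((⌈((k-1 : ℕ):ℝ) * φ (ns (k-1))⌉₊ : ℝ) + 2*m) ≤ φ p
  h0 : ∀ k, 1 ≤ k → 1 ≤ φ (ns k)

namespace GoodSeq

variable {φ : ℕ → ℝ} {m : ℕ} (gs : GoodSeq φ m)

/-- block lengths -/
noncomputable def L (k : ℕ) : ℕ := ⌈(k:ℝ) * φ (gs.ns k)⌉₊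

/-- block start positions: block `k` occupies `(s k, ns k]`. -/
noncomputable def s (k : ℕ) : ℕ := gs.ns k - gs.L k

def inBlock (p : ℕ) : Prop := ∃ k, 1 ≤ k ∧ gs.s k < p ∧ p ≤ gs.ns k

def FreeP (p : ℕ) : Prop := 1 ≤ p ∧ ¬ m ∣ p ∧ ¬ gs.inBlock p

open scoped Classical in
/-- the digit sequence built from forced digits and free digits `b`. -/
noncomputable def adig (b : ℕ → ℕ) (p : ℕ) : ℕ :=
  if gs.inBlock p then 1 else if m ∣ p then 0 else b p

section facts

variable (hpos : ∀ n, 0 < φ n) (hmono : Monotone φ) (hm : 16 ≤ m)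

lemma L_ge (k : ℕ) : (k:ℝ) * φ (gs.ns k) ≤ (gs.L k : ℝ) := Nat.le_ceil _

include hpos hm in
lemma L_le {k : ℕ} (hk : 1 ≤ k) : (8*m:ℝ) * (gs.L k : ℝ) ≤ (gs.ns k : ℝ) := by
  have h0 := gs.h0 k hk
  have h1 := gs.h1 k hk
  have hc : (gs.L k : ℝ) < (k:ℝ) * φ (gs.ns k) + 1 := by
    apply Nat.ceil_lt_add_one
    have : (0:ℝ) < φ (gs.ns k) := hpos _
    positivity
  have hk1 : (1:ℝ) ≤ (k:ℝ) := by exact_mod_cast hk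
  have hm1 : (1:ℝ) ≤ (m:ℝ) := by
    have : (1:ℕ) ≤ m := by omega
    exact_mod_cast this
  nlinarith

include hpos hm in
lemma L_le_ns {k : ℕ} (hk : 1 ≤ k) : gs.L k ≤ gs.ns k := by
  have := gs.L_le hpos hm hk
  have hm1 : (1:ℝ) ≤ (m:ℝ) := by
    have : (1:ℕ) ≤ m := by omega
    exact_mod_cast this
  have h : (gs.L k : ℝ) ≤ (gs.ns k : ℝ) := by nlinarith [Nat.cast_nonneg (α := ℝ) (gs.L k)]
  exact_mod_cast h

include hpos hm in
lemma s_cast {k : ℕ} (hk : 1 ≤ k) : (gs.s k : ℝ) = (gs.ns k : ℝ) - (gs.L k : ℝ) := by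
  rw [s, Nat.cast_sub (gs.L_le_ns hpos hm hk)]

include hpos hm in
lemma ns_le_two_s {k : ℕ} (hk : 1 ≤ k) : gs.ns k ≤ 2 * gs.s k := by
  have h1 := gs.L_le hpos hm hk
  have hsc := gs.s_cast hpos hm hk
  have hm1 : (1:ℝ) ≤ (m:ℝ) := by
    have : (1:ℕ) ≤ m := by omega
    exact_mod_cast this
  have h : (gs.ns k : ℝ) ≤ 2 * (gs.s k : ℝ) := by nlinarith [Nat.cast_nonneg (α := ℝ) (gs.L k)]
  exact_mod_cast h

include hpos hm in
lemma phi_s_ge {k : ℕ} (hk : 1 ≤ k) :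
    (k:ℝ) * ((gs.L (k-1) : ℝ) + 2*m) ≤ φ (gs.s k) :=
  gs.h3 k hk (gs.s k) (gs.ns_le_two_s hpos hm hk)

include hpos hmono hm in
lemma L_step {k : ℕ} (hk : 1 ≤ k) : gs.L (k-1) + 2*m ≤ gs.L k := by
  have h1 := gs.phi_s_ge hpos hm hk
  have h2 := gs.L_ge k
  have h3 : φ (gs.s k) ≤ φ (gs.ns k) := hmono (Nat.sub_le _ _)
  have h0 := gs.h0 k hk
  have hk1 : (1:ℝ) ≤ (k:ℝ) := by exact_mod_cast hk
  have h : ((gs.L (k-1) : ℝ) + 2*m) ≤ (gs.L k : ℝ) := by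
    nlinarith [mul_nonneg (sub_nonneg.mpr hk1) (le_of_lt (hpos (gs.ns k))),
      mul_nonneg (sub_nonneg.mpr hk1)
        (add_nonneg (Nat.cast_nonneg (α := ℝ) (gs.L (k-1)))
          (by positivity : (0:ℝ) ≤ 2*(m:ℝ)))]
  exact_mod_cast h

include hpos hmono hm in
lemma L_mono : Monotone gs.L := by
  apply monotone_nat_of_le_succ
  intro k
  have h := gs.L_step hpos hmono hm (k := k+1) (by omega)
  simp only [Nat.add_sub_cancel] at h
  omega

include hm in
lemma ns_lt_succ (k : ℕ) : gs.ns k < gs.ns (k+1) := by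
  have := gs.h2 (k+1) (by omega)
  simp only [Nat.add_sub_cancel] at this
  have hm1 : 1 ≤ m := by omega
  nlinarith

include hm in
lemma ns_strictMono : StrictMono gs.ns :=
  strictMono_nat_of_lt_succ (gs.ns_lt_succ hm)

include hm in
lemma ns_ge (k : ℕ) : k ≤ gs.ns k := (gs.ns_strictMono hm).le_apply

include hpos hm in
lemma s_succ_ge (k : ℕ) : gs.ns k + m ≤ gs.s (k+1) := by
  have h1 := gs.ns_le_two_s hpos hm (k := k+1) (by omega)
  have h2 := gs.h2 (k+1) (by omega)
  simp only [Nat.add_sub_cancel] at h2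
  have hm1 : 1 ≤ m := by omega
  nlinarith

include hpos hm in
lemma s_mono_step (k : ℕ) : gs.s k + m ≤ gs.s (k+1) := by
  have h1 := gs.s_succ_ge hpos hm k
  have h2 : gs.s k ≤ gs.ns k := Nat.sub_le _ _
  omega

include hpos hm in
lemma s_mono {j k : ℕ} (hjk : j ≤ k) : gs.s j ≤ gs.s k := by
  have hmon : Monotone gs.s := monotone_nat_of_le_succ (fun i => by
    have := gs.s_mono_step hpos hm i
    omega)
  exact hmon hjk

include hpos hm in
lemma block_le {p k : ℕ} (hp : p ≤ gs.s (k+1)) (hb : gs.inBlock p) :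
    ∃ j, 1 ≤ j ∧ j ≤ k ∧ gs.s j < p ∧ p ≤ gs.ns j := by
  obtain ⟨j, hj1, hjs, hjn⟩ := hb
  refine ⟨j, hj1, ?_, hjs, hjn⟩
  by_contra h
  have : k + 1 ≤ j := by omega
  have := gs.s_mono hpos hm this
  omega

include hpos hm in
lemma sum_L_le (k : ℕ) :
    (4*m:ℝ) * (∑ j ∈ Finset.Icc 1 k, (gs.L j : ℝ)) ≤ (gs.ns k : ℝ) := by
  induction k with
  | zero => simp [gs.ns0]
  | succ i ih =>
    rw [← Finset.Ico_add_one_right_eq_Icc, Finset.sum_Ico_succ_top (by omega), Finset.Ico_add_one_right_eq_Icc]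
    have h1 := gs.L_le hpos hm (k := i+1) (by omega)
    have h2 := gs.h2 (i+1) (by omega)
    simp only [Nat.add_sub_cancel] at h2
    have h2r : (8*m:ℝ) * ((gs.ns i : ℝ) + 1) ≤ (gs.ns (i+1) : ℝ) := by exact_mod_cast h2
    have hm1 : (1:ℝ) ≤ (m:ℝ) := by
      have : (1:ℕ) ≤ m := by omega
      exact_mod_cast this
    have hnn : (0:ℝ) ≤ (gs.ns i : ℝ) := Nat.cast_nonneg _
    nlinarith

end facts

end GoodSeq

lemma goodSeq_exists {φ : ℕ → ℝ} (hpos : ∀ n, 0 < φ n) (htends : Tendsto φ atTop atTop)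
    (hlimsup : atTop.limsup (fun n : ℕ => (((n : ℝ) / φ n : ℝ) : EReal)) = ⊤)
    (m : ℕ) : Nonempty (GoodSeq φ m) := by
  have hstep : ∀ (k prev : ℕ), 1 ≤ k → ∃ n : ℕ,
      (8*(m:ℝ)*((k:ℝ)+1) * φ n ≤ (n:ℝ)) ∧ (8*m*(prev+1) ≤ n) ∧
      (∀ p, n ≤ 2*p → (k:ℝ) * ((⌈((k-1:ℕ):ℝ) * φ prev⌉₊ : ℝ) + 2*m) ≤ φ p) ∧
      1 ≤ φ n := by
    intro k prev _
    set M : ℝ := max 1 ((k:ℝ) * ((⌈((k-1:ℕ):ℝ) * φ prev⌉₊ : ℝ) + 2*m)) with hM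
    obtain ⟨N1, hN1⟩ := (htends.eventually (eventually_ge_atTop M)).exists_forall_of_atTop
    have hfreq : ∃ᶠ n : ℕ in atTop,
        ((8*(m:ℝ)*((k:ℝ)+1) : ℝ) : EReal) < (((n:ℝ)/φ n : ℝ) : EReal) := by
      refine frequently_lt_of_lt_limsup ?_ ?_
      · isBoundedDefault
      · rw [hlimsup]
        exact EReal.coe_lt_top _
    obtain ⟨n, hn1, hn2⟩ :=
      (hfreq.and_eventually (eventually_ge_atTop (max (2*N1) (8*m*(prev+1))))).exists
    refine ⟨n, ?_, le_trans (le_max_right _ _) hn2, ?_, ?_⟩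
    · have : (8*(m:ℝ)*((k:ℝ)+1) : ℝ) < (n:ℝ)/φ n := by exact_mod_cast hn1
      have hφ := hpos n
      rw [lt_div_iff₀ hφ] at this
      exact this.le
    · intro p hp
      have hpN1 : N1 ≤ p := by
        have h1 : 2*N1 ≤ n := le_trans (le_max_left _ _) hn2
        omega
      exact le_trans (le_max_right _ _) (hN1 p hpN1)
    · have hnN1 : N1 ≤ n := by
        have h1 : 2*N1 ≤ n := le_trans (le_max_left _ _) hn2
        omega
      exact le_trans (le_max_left _ _) (hN1 n hnN1)
  choose step hs1 hs2 hs3 hs0 using hstep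
  let ns : ℕ → ℕ := fun k => Nat.rec 0 (fun j ih => step (j+1) ih (by omega)) k
  have hns0 : ns 0 = 0 := rfl
  have hnss : ∀ j : ℕ, ns (j+1) = step (j+1) (ns j) (by omega) := fun j => rfl
  refine ⟨⟨ns, hns0, ?_, ?_, ?_, ?_⟩⟩
  · intro k hk
    obtain ⟨j, rfl⟩ : ∃ j, k = j+1 := ⟨k-1, by omega⟩
    exact hs1 (j+1) (ns j) (by omega)
  · intro k hk
    obtain ⟨j, rfl⟩ : ∃ j, k = j+1 := ⟨k-1, by omega⟩
    simpa using hs2 (j+1) (ns j) (by omega)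
  · intro k hk
    obtain ⟨j, rfl⟩ : ∃ j, k = j+1 := ⟨k-1, by omega⟩
    simpa using hs3 (j+1) (ns j) (by omega)
  · intro k hk
    obtain ⟨j, rfl⟩ : ∃ j, k = j+1 := ⟨k-1, by omega⟩
    exact hs0 (j+1) (ns j) (by omega)

namespace GoodSeq

variable {φ : ℕ → ℝ} {m : ℕ} (gs : GoodSeq φ m)
variable (hpos : ∀ n, 0 < φ n) (hmono : Monotone φ) (hm : 16 ≤ m)

include hpos hm in
lemma notinblock_gap {k p : ℕ} (h1 : gs.ns k < p) (h2 : p ≤ gs.s (k+1)) :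
    ¬ gs.inBlock p := by
  rintro ⟨j, hj1, hjs, hjn⟩
  rcases le_or_gt j k with h | h
  · have : gs.ns j ≤ gs.ns k := (gs.ns_strictMono hm).monotone h
    omega
  · have : gs.s (k+1) ≤ gs.s j := gs.s_mono hpos hm h
    omega

include hpos hm in
lemma zero_exists : ∀ N, ∃ p, N ≤ p ∧ m ∣ p ∧ ¬ gs.inBlock p := by
  intro N
  set p := m * (gs.ns N / m + 1) with hp
  obtain ⟨t, r, hdr, hrm, hp0⟩ : ∃ t r, t + r = gs.ns N ∧ r < m ∧ p = t + m :=
    ⟨m*(gs.ns N/m), gs.ns N % m, Nat.div_add_mod _ m, Nat.mod_lt _ (by omega),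
      by rw [hp, mul_add, mul_one]⟩
  have hgap := gs.s_succ_ge hpos hm N
  have hNle := gs.ns_ge hm N
  refine ⟨p, by omega, Dvd.intro _ rfl,
    gs.notinblock_gap hpos hm (k := N) (by omega) (by omega)⟩

include hpos hm in
lemma free_exists : ∀ N, ∃ p, N ≤ p ∧ gs.FreeP p := by
  intro N
  have hgap := gs.s_succ_ge hpos hm N
  have hNle := gs.ns_ge hm N
  have hnb1 : ¬ gs.inBlock (gs.ns N + 1) :=
    gs.notinblock_gap hpos hm (k := N) (by omega) (by omega)
  have hnb2 : ¬ gs.inBlock (gs.ns N + 2) :=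
    gs.notinblock_gap hpos hm (k := N) (by omega) (by omega)
  by_cases hd : m ∣ (gs.ns N + 1)
  · refine ⟨gs.ns N + 2, by omega, by omega, ?_, hnb2⟩
    intro hd2
    obtain ⟨a, ha⟩ := hd
    obtain ⟨b, hb⟩ := hd2
    have : m * b - m * a = 1 := by omega
    rcases le_or_gt b a with h | h
    · have : m * b ≤ m * a := Nat.mul_le_mul_left m h
      omega
    · have : m * a + m ≤ m * b := by
        have : a + 1 ≤ b := h
        calc m * a + m = m * (a+1) := by ring
          _ ≤ m * b := Nat.mul_le_mul_left m this
      omega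
  · exact ⟨gs.ns N + 1, by omega, by omega, hd, hnb1⟩

include hpos hm in
lemma freeP_infinite : {p | gs.FreeP p}.Infinite := by
  by_contra h
  obtain ⟨b, hb⟩ := (Set.not_infinite.mp h).bddAbove
  obtain ⟨p, hp1, hp2⟩ := gs.free_exists hpos hm (b+1)
  have := hb hp2
  omega

include hpos hm in
lemma L_le_ns_nat {k : ℕ} (hk : 1 ≤ k) : gs.s k + gs.L k = gs.ns k := by
  have := gs.L_le_ns hpos hm hk
  rw [s]
  omega

include hpos hmono hm in
lemma forced_zero_in_run {k i ℓ : ℕ} (hk : 1 ≤ k) (hle : i + ℓ ≤ gs.s (k+1))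
    (hℓ : gs.L k + 2*m + 1 ≤ ℓ) : ∃ q, i < q ∧ q ≤ i + ℓ ∧ m ∣ q ∧ ¬ gs.inBlock q := by
  set p₀ := m * (i / m + 1) with hp₀
  obtain ⟨t, r, hdr, hrm, hp0⟩ : ∃ t r, t + r = i ∧ r < m ∧ p₀ = t + m :=
    ⟨m*(i/m), i % m, Nat.div_add_mod _ m, Nat.mod_lt _ (by omega),
      by rw [hp₀, mul_add, mul_one]⟩
  have hip : i < p₀ ∧ p₀ ≤ i + m := by omega
  by_cases hb : gs.inBlock p₀
  · obtain ⟨j, hj1, hjk, hjs, hjn⟩ := gs.block_le hpos hm (k := k) (by omega) hb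
    set q := m * (gs.ns j / m + 1) with hq
    obtain ⟨t', r', hdr', hrm', hq0⟩ : ∃ t' r', t' + r' = gs.ns j ∧ r' < m ∧ q = t' + m :=
      ⟨m*(gs.ns j/m), gs.ns j % m, Nat.div_add_mod _ m, Nat.mod_lt _ (by omega),
        by rw [hq, mul_add, mul_one]⟩
    have hq1 : gs.ns j < q ∧ q ≤ gs.ns j + m := by omega
    have hgap := gs.s_succ_ge hpos hm j
    have hnb : ¬ gs.inBlock q := gs.notinblock_gap hpos hm (k := j) (by omega) (by omega)
    have hLn := gs.L_le_ns_nat hpos hm hj1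
    have hLmono : gs.L j ≤ gs.L k := gs.L_mono hpos hmono hm hjk
    refine ⟨q, by omega, by omega, Dvd.intro _ rfl, hnb⟩
  · exact ⟨p₀, hip.1, by omega, Dvd.intro _ rfl, hb⟩

end GoodSeq

namespace GoodSeq

variable {φ : ℕ → ℝ} {m : ℕ} (gs : GoodSeq φ m)
variable (hpos : ∀ n, 0 < φ n) (hmono : Monotone φ) (hm : 16 ≤ m)

open scoped Classical in
include hpos hm in
lemma block_card_le (n : ℕ) : 2*m*((Finset.range n).filter gs.inBlock).card ≤ n := by
  rcases Nat.eq_zero_or_pos n with rfl | hn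
  · simp
  have hex : ∃ j, n ≤ gs.ns j := ⟨n, gs.ns_ge hm n⟩
  set j0 := Nat.find hex with hj0def
  have hj0 : n ≤ gs.ns j0 := Nat.find_spec hex
  have hj01 : 1 ≤ j0 := by
    rcases Nat.eq_zero_or_pos j0 with h0 | h
    · rw [h0, gs.ns0] at hj0
      omega
    · exact h
  set k := j0 - 1 with hkdef
  have hkj0 : k + 1 = j0 := by omega
  have hnsk : gs.ns k < n := by
    have := Nat.find_min hex (m := k) (by omega)
    omega
  have hnk1 : n ≤ gs.ns (k+1) := by rw [hkj0]; exact hj0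
  have hsub : (Finset.range n).filter gs.inBlock ⊆
      (Finset.Icc 1 (k+1)).biUnion (fun j => Finset.Ioc (gs.s j) (min (gs.ns j) (n-1))) := by
    intro p hp
    simp only [Finset.mem_filter, Finset.mem_range] at hp
    obtain ⟨hpn, j, hj1, hjs, hjn⟩ := hp
    have hjle : j ≤ k+1 := by
      by_contra hcon
      have h2 : gs.s (k+1+1) ≤ gs.s j := gs.s_mono hpos hm (show k+1+1 ≤ j by omega)
      have h3 := gs.s_succ_ge hpos hm (k+1)
      omega
    simp only [Finset.mem_biUnion, Finset.mem_Icc, Finset.mem_Ioc]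
    exact ⟨j, ⟨hj1, hjle⟩, hjs, le_min hjn (by omega)⟩
  have hcard : ((Finset.range n).filter gs.inBlock).card
      ≤ ∑ j ∈ Finset.Icc 1 (k+1), (min (gs.ns j) (n-1) - gs.s j) := by
    refine (Finset.card_le_card hsub).trans (Finset.card_biUnion_le.trans ?_)
    apply Finset.sum_le_sum
    intro j _
    rw [Nat.card_Ioc]
  have hsplit : ∑ j ∈ Finset.Icc 1 (k+1), (min (gs.ns j) (n-1) - gs.s j)
      = ∑ j ∈ Finset.Icc 1 k, (min (gs.ns j) (n-1) - gs.s j)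
        + (min (gs.ns (k+1)) (n-1) - gs.s (k+1)) := by
    rw [← Finset.Ico_add_one_right_eq_Icc, Finset.sum_Ico_succ_top (by omega), Finset.Ico_add_one_right_eq_Icc]
  have hterm : ∀ j ∈ Finset.Icc 1 k, (min (gs.ns j) (n-1) - gs.s j) ≤ gs.L j := by
    intro j hj
    simp only [Finset.mem_Icc] at hj
    have := gs.L_le_ns_nat hpos hm hj.1
    omega
  have hsum1 : ∑ j ∈ Finset.Icc 1 k, (min (gs.ns j) (n-1) - gs.s j)
      ≤ ∑ j ∈ Finset.Icc 1 k, gs.L j := Finset.sum_le_sum hterm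
  have hsumL : (4*m:ℝ) * (∑ j ∈ Finset.Icc 1 k, (gs.L j : ℝ)) ≤ (gs.ns k : ℝ) :=
    gs.sum_L_le hpos hm k
  have hsumcast : (∑ j ∈ Finset.Icc 1 k, (gs.L j : ℝ)) = ((∑ j ∈ Finset.Icc 1 k, gs.L j : ℕ) : ℝ) := by
    push_cast
    rfl
  have hmr : (16:ℝ) ≤ (m:ℝ) := by exact_mod_cast hm
  have hnr : (1:ℝ) ≤ (n:ℝ) := by exact_mod_cast hn
  have hnskr : (gs.ns k : ℝ) ≤ (n:ℝ) := by
    have : gs.ns k ≤ n := by omega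
    exact_mod_cast this
  set t := min (gs.ns (k+1)) (n-1) - gs.s (k+1) with ht
  have hgoal : (2*m:ℝ) * (((Finset.range n).filter gs.inBlock).card : ℝ) ≤ (n:ℝ) := by
    have hcardr : (((Finset.range n).filter gs.inBlock).card : ℝ)
        ≤ ((∑ j ∈ Finset.Icc 1 k, gs.L j : ℕ) : ℝ) + (t:ℝ) := by
      have h1 : ((Finset.range n).filter gs.inBlock).card
          ≤ (∑ j ∈ Finset.Icc 1 k, gs.L j) + t := by
        omega
      exact_mod_cast h1
    rcases le_or_gt (n-1) (gs.s (k+1)) with hcase | hcase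
    · have ht0 : t = 0 := by omega
      rw [ht0] at hcardr
      norm_num at hcardr
      nlinarith
    · have htL : t ≤ gs.L (k+1) := by
        have := gs.L_le_ns_nat hpos hm (k := k+1) (by omega)
        omega
      have hL1 := gs.L_le hpos hm (k := k+1) (by omega)
      have h2s := gs.ns_le_two_s hpos hm (k := k+1) (by omega)
      have hsn : (gs.s (k+1) : ℝ) ≤ (n:ℝ) - 1 := by
        have : gs.s (k+1) ≤ n - 1 := by omega
        have h' : (gs.s (k+1):ℝ) ≤ ((n-1 : ℕ):ℝ) := by exact_mod_cast this
        rw [Nat.cast_sub hn] at h'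
        exact_mod_cast h'
      have h2sr : (gs.ns (k+1) : ℝ) ≤ 2 * (gs.s (k+1) : ℝ) := by exact_mod_cast h2s
      have htLr : (t:ℝ) ≤ (gs.L (k+1) : ℝ) := by exact_mod_cast htL
      rw [← hsumcast] at hcardr
      nlinarith
  exact_mod_cast hgoal

open scoped Classical in
include hpos hm in
lemma count_free_ge (n : ℕ) :
    ((1:ℝ) - 2/(m:ℝ)) * (n:ℝ) - 2 ≤ (Nat.count gs.FreeP n : ℝ) := by
  classical
  set mc := ((Finset.range n).filter (fun p => m ∣ p)).card with hmc
  set bc := ((Finset.range n).filter gs.inBlock).card with hbc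
  have hbcn : 2*m*bc ≤ n := gs.block_card_le hpos hm n
  have hmcn : m * mc ≤ n + m := by
    have hsub : (Finset.range n).filter (fun p => m ∣ p) ⊆
        insert 0 ((Finset.Ioc 0 (n-1)).filter (fun p => m ∣ p)) := by
      intro p hp
      simp only [Finset.mem_filter, Finset.mem_range] at hp
      rcases Nat.eq_zero_or_pos p with rfl | hppos
      · simp
      · simp only [Finset.mem_insert, Finset.mem_filter, Finset.mem_Ioc]
        right
        exact ⟨⟨hppos, by omega⟩, hp.2⟩
    have h1 : mc ≤ 1 + ((Finset.Ioc 0 (n-1)).filter (fun p => m ∣ p)).card := by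
      calc mc ≤ (insert 0 ((Finset.Ioc 0 (n-1)).filter (fun p => m ∣ p))).card :=
            Finset.card_le_card hsub
        _ ≤ 1 + _ := by
            rw [add_comm]
            exact Finset.card_insert_le _ _
    rw [Nat.Ioc_filter_dvd_card_eq_div] at h1
    have h2 : m * ((n-1)/m) ≤ n := le_trans (Nat.mul_div_le _ _) (by omega)
    calc m * mc ≤ m * (1 + (n-1)/m) := Nat.mul_le_mul_left m h1
      _ = m + m * ((n-1)/m) := by ring
      _ ≤ n + m := by omega
  have hcnt : Nat.count gs.FreeP n + ((Finset.range n).filter (fun p => ¬ gs.FreeP p)).card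
      = n := by
    rw [Nat.count_eq_card_filter_range]
    rw [Finset.card_filter_add_card_filter_not]
    exact Finset.card_range n
  have hnf : ((Finset.range n).filter (fun p => ¬ gs.FreeP p)).card ≤ mc + bc := by
    have hsub : (Finset.range n).filter (fun p => ¬ gs.FreeP p) ⊆
        ((Finset.range n).filter (fun p => m ∣ p)) ∪ ((Finset.range n).filter gs.inBlock) := by
      intro p hp
      simp only [Finset.mem_filter, Finset.mem_range, Finset.mem_union] at hp ⊢
      obtain ⟨hpn, hnfree⟩ := hp
      rw [FreeP] at hnfree
      push_neg at hnfree
      rcases Nat.eq_zero_or_pos p with rfl | hppos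
      · exact Or.inl ⟨hpn, dvd_zero m⟩
      · by_cases hdvd : m ∣ p
        · exact Or.inl ⟨hpn, hdvd⟩
        · exact Or.inr ⟨hpn, hnfree hppos hdvd⟩
    exact (Finset.card_le_card hsub).trans (Finset.card_union_le _ _)
  -- now assemble over ℝ
  have hm0 : (0:ℝ) < (m:ℝ) := by
    have : 0 < m := by omega
    exact_mod_cast this
  have hA : (n:ℝ) ≤ (Nat.count gs.FreeP n : ℝ) + (mc:ℝ) + (bc:ℝ) := by
    have : n ≤ Nat.count gs.FreeP n + mc + bc := by omega
    exact_mod_cast this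
  have hAm : (m:ℝ) * (n:ℝ) ≤ (m:ℝ) * ((Nat.count gs.FreeP n : ℝ) + (mc:ℝ) + (bc:ℝ)) :=
    mul_le_mul_of_nonneg_left hA (le_of_lt hm0)
  have hBr : (m:ℝ) * (mc:ℝ) ≤ (n:ℝ) + (m:ℝ) := by exact_mod_cast hmcn
  have hCr : 2 * ((m:ℝ) * (bc:ℝ)) ≤ (n:ℝ) := by
    have : ((2*m*bc : ℕ):ℝ) ≤ ((n:ℕ):ℝ) := by exact_mod_cast hbcn
    push_cast at this
    linarith
  have hmain : ((m:ℝ) - 2)*(n:ℝ) - 2*(m:ℝ) ≤ (m:ℝ) * (Nat.count gs.FreeP n : ℝ) := by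
    nlinarith
  have h2 : ((1:ℝ)-2/(m:ℝ))*(n:ℝ) - 2 = (((m:ℝ)-2)*(n:ℝ) - 2*(m:ℝ))/(m:ℝ) := by
    field_simp
  rw [h2]
  rw [div_le_iff₀ hm0]
  calc ((m:ℝ)-2)*(n:ℝ) - 2*(m:ℝ) ≤ (m:ℝ) * (Nat.count gs.FreeP n : ℝ) := hmain
    _ = (Nat.count gs.FreeP n : ℝ) * (m:ℝ) := by ring

end GoodSeq

/-- The run-length function: `runLen x n` is the length of the longest run of `1`'s
among the first `n` dyadic digits `x_1, …, x_n` of `x`. -/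
noncomputable def runLen (x : ℝ) (n : ℕ) : ℕ :=
  sSup {ℓ : ℕ | ∃ i, i + ℓ ≤ n ∧ ∀ j < ℓ, dyadicDigit x (i + j + 1) = 1}

/-- The exceptional set `E_max^φ` of points of `[0,1]` where `r_n(x)/φ(n)` has
liminf `0` and limsup `+∞`. -/
noncomputable def Emax (φ : ℕ → ℝ) : Set ℝ :=
  {x ∈ Set.Icc (0 : ℝ) 1 |
    atTop.liminf (fun n => ((runLen x n / φ n : ℝ) : EReal)) = 0 ∧
    atTop.limsup (fun n => ((runLen x n / φ n : ℝ) : EReal)) = ⊤}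

lemma runLen_bddAbove (x : ℝ) (n : ℕ) :
    BddAbove {ℓ : ℕ | ∃ i, i + ℓ ≤ n ∧ ∀ j < ℓ, dyadicDigit x (i + j + 1) = 1} := by
  refine ⟨n, fun ℓ hℓ => ?_⟩
  obtain ⟨i, hi, _⟩ := hℓ
  omega

lemma runLen_zero_mem (x : ℝ) (n : ℕ) :
    0 ∈ {ℓ : ℕ | ∃ i, i + ℓ ≤ n ∧ ∀ j < ℓ, dyadicDigit x (i + j + 1) = 1} :=
  ⟨0, by omega, fun j hj => by omega⟩

lemma le_runLen (x : ℝ) (n : ℕ) {ℓ i : ℕ} (hi : i + ℓ ≤ n)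
    (hd : ∀ j < ℓ, dyadicDigit x (i + j + 1) = 1) : ℓ ≤ runLen x n :=
  le_csSup (runLen_bddAbove x n) ⟨i, hi, hd⟩

lemma runLen_le (x : ℝ) (n : ℕ) {B : ℕ}
    (h : ∀ ℓ i, i + ℓ ≤ n → (∀ j < ℓ, dyadicDigit x (i + j + 1) = 1) → ℓ ≤ B) :
    runLen x n ≤ B := by
  apply csSup_le ⟨0, runLen_zero_mem x n⟩
  rintro ℓ ⟨i, hi, hd⟩
  exact h ℓ i hi hd

namespace GoodSeq

variable {φ : ℕ → ℝ} {m : ℕ} (gs : GoodSeq φ m)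
variable (hpos : ∀ n, 0 < φ n) (hmono : Monotone φ) (hm : 16 ≤ m)

/-- The Moran-type subset of `E_max`. -/
noncomputable def Eset : Set ℝ :=
  {x | ∃ b : ℕ → ℕ, (∀ p, b p ≤ 1) ∧ x = dval (gs.adig b)}

lemma adig_le_one {b : ℕ → ℕ} (hb : ∀ p, b p ≤ 1) (p : ℕ) : gs.adig b p ≤ 1 := by
  rw [adig]
  split
  · omega
  · split
    · omega
    · exact hb p

include hpos hm in
lemma adig_zeros (b : ℕ → ℕ) : ∀ N, ∃ p, N ≤ p ∧ gs.adig b p = 0 := by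
  intro N
  obtain ⟨p, hp1, hp2, hp3⟩ := gs.zero_exists hpos hm N
  exact ⟨p, hp1, by rw [adig, if_neg hp3, if_pos hp2]⟩

include hpos hm in
lemma adig_digit {b : ℕ → ℕ} (hb : ∀ p, b p ≤ 1) {p : ℕ} (hp : 1 ≤ p) :
    dyadicDigit (dval (gs.adig b)) p = gs.adig b p := by
  obtain ⟨j, rfl⟩ : ∃ j, p = j + 1 := ⟨p - 1, by omega⟩
  exact dval_digit (gs.adig_le_one hb) (gs.adig_zeros hpos hm b) j

include hpos hm in
lemma run_lower {b : ℕ → ℕ} (hb : ∀ p, b p ≤ 1) {k n : ℕ} (hk : 1 ≤ k)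
    (hn : gs.ns k ≤ n) : gs.L k ≤ runLen (dval (gs.adig b)) n := by
  have hLn := gs.L_le_ns_nat hpos hm hk
  apply le_runLen _ _ (i := gs.s k) (by omega)
  intro j hj
  rw [gs.adig_digit hpos hm hb (by omega)]
  rw [adig, if_pos]
  exact ⟨k, hk, by omega, by omega⟩

include hpos hmono hm in
lemma run_upper {b : ℕ → ℕ} (hb : ∀ p, b p ≤ 1) {k : ℕ} (hk : 1 ≤ k) :
    runLen (dval (gs.adig b)) (gs.s (k+1)) ≤ gs.L k + 2*m := by
  apply runLen_le
  intro ℓ i hi hd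
  by_contra hcon
  obtain ⟨q, hq1, hq2, hq3, hq4⟩ :=
    gs.forced_zero_in_run hpos hmono hm hk hi (by omega)
  have hdq := hd (q - i - 1) (by omega)
  rw [show i + (q - i - 1) + 1 = q by omega] at hdq
  rw [gs.adig_digit hpos hm hb (by omega)] at hdq
  rw [adig, if_neg hq4, if_pos hq3] at hdq
  omega

end GoodSeq

lemma ereal_top_of_nat_le (x : EReal) (h : ∀ M : ℕ, ((M:ℝ):EReal) ≤ x) : x = ⊤ := by
  induction x using EReal.rec with
  | bot =>
    have := h 0
    simp at this
  | coe r =>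
    obtain ⟨M, hM⟩ := exists_nat_gt r
    have := EReal.coe_le_coe_iff.mp (h M)
    linarith
  | top => rfl

lemma ereal_zero_of_le (x : EReal) (h0 : (0:EReal) ≤ x)
    (h : ∀ k : ℕ, x ≤ (((1:ℝ)/((k:ℝ)+1) : ℝ) : EReal)) : x = 0 := by
  induction x using EReal.rec with
  | bot =>
    exfalso
    exact absurd h0 (by simp)
  | coe r =>
    have hr0 : (0:ℝ) ≤ r := by exact_mod_cast h0
    have hle : r ≤ 0 := by
      by_contra hc
      push_neg at hc
      obtain ⟨k, hk⟩ := exists_nat_one_div_lt hc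
      have := EReal.coe_le_coe_iff.mp (h k)
      linarith
    have : r = 0 := le_antisymm hle hr0
    rw [this]
    rfl
  | top =>
    exfalso
    have := h 0
    simp only [Nat.cast_zero, zero_add, div_one] at this
    exact absurd (top_le_iff.mp this) (EReal.coe_ne_top _)

namespace GoodSeq

variable {φ : ℕ → ℝ} {m : ℕ} (gs : GoodSeq φ m)
variable (hpos : ∀ n, 0 < φ n) (hmono : Monotone φ) (hm : 16 ≤ m)

include hpos hm in
lemma limsup_top {b : ℕ → ℕ} (hb : ∀ p, b p ≤ 1) :
    atTop.limsup (fun n => ((runLen (dval (gs.adig b)) n / φ n : ℝ) : EReal)) = ⊤ := by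
  apply ereal_top_of_nat_le
  intro M
  refine le_limsup_of_frequently_le ?_ (by isBoundedDefault)
  rw [frequently_atTop]
  intro N
  set k := max (max M 1) N with hk
  refine ⟨gs.ns k, le_trans (le_trans (le_max_right _ _) (gs.ns_ge hm k)) le_rfl, ?_⟩
  have h1 : gs.L k ≤ runLen (dval (gs.adig b)) (gs.ns k) :=
    gs.run_lower hpos hm hb (by omega) le_rfl
  have h2 := gs.L_ge k
  have hφ := hpos (gs.ns k)
  rw [EReal.coe_le_coe_iff, le_div_iff₀ hφ]
  have hMk : (M:ℝ) ≤ (k:ℝ) := by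
    have : M ≤ k := by omega
    exact_mod_cast this
  have h1r : (gs.L k : ℝ) ≤ (runLen (dval (gs.adig b)) (gs.ns k) : ℝ) := by exact_mod_cast h1
  nlinarith

include hpos hmono hm in
lemma liminf_zero {b : ℕ → ℕ} (hb : ∀ p, b p ≤ 1) :
    atTop.liminf (fun n => ((runLen (dval (gs.adig b)) n / φ n : ℝ) : EReal)) = 0 := by
  apply ereal_zero_of_le
  · refine le_liminf_of_le (by isBoundedDefault) ?_
    apply Eventually.of_forall
    intro n
    have hφ := hpos n
    have : (0:ℝ) ≤ (runLen (dval (gs.adig b)) n : ℝ) / φ n := by positivity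
    exact_mod_cast this
  · intro k
    refine liminf_le_of_frequently_le ?_ (by isBoundedDefault)
    rw [frequently_atTop]
    intro N
    set j := max (max k 1) N with hj
    have hj1 : 1 ≤ j := by omega
    have hgap := gs.s_succ_ge hpos hm j
    have hnsj := gs.ns_ge hm j
    refine ⟨gs.s (j+1), by omega, ?_⟩
    have hrun := gs.run_upper hpos hmono hm hb hj1
    have hφg := gs.phi_s_ge hpos hm (k := j+1) (by omega)
    simp only [Nat.add_sub_cancel] at hφg
    have hφ := hpos (gs.s (j+1))
    set B : ℝ := (gs.L j : ℝ) + 2*m with hB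
    have hBpos : (0:ℝ) < B := by
      have : (16:ℝ) ≤ (m:ℝ) := by exact_mod_cast hm
      have : (0:ℝ) ≤ (gs.L j : ℝ) := Nat.cast_nonneg _
      simp only [hB]
      linarith
    have hrunr : (runLen (dval (gs.adig b)) (gs.s (j+1)) : ℝ) ≤ B := by
      have : (runLen (dval (gs.adig b)) (gs.s (j+1)) : ℝ) ≤ ((gs.L j + 2*m : ℕ) : ℝ) := by
        exact_mod_cast hrun
      push_cast at this
      simpa [hB] using this
    rw [EReal.coe_le_coe_iff]
    have hc1 : (runLen (dval (gs.adig b)) (gs.s (j+1)) : ℝ) / φ (gs.s (j+1)) ≤ B / φ (gs.s (j+1)) :=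
      (div_le_div_iff_of_pos_right hφ).mpr hrunr
    have hc2 : B / φ (gs.s (j+1)) ≤ B / (((j:ℝ)+1) * B) := by
      apply div_le_div_of_nonneg_left (le_of_lt hBpos) ?_ ?_
      · positivity
      · calc ((j:ℝ)+1) * B = ((j+1 : ℕ):ℝ) * ((gs.L ((j+1)-1) : ℝ) + 2*m) := by
              push_cast
              simp [hB]
          _ ≤ φ (gs.s (j+1)) := by
              simpa using hφg
    have hc3 : B / (((j:ℝ)+1) * B) = 1 / ((j:ℝ)+1) := by
      rw [mul_comm, ← div_div, div_self (ne_of_gt hBpos)]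
    have hc4 : (1:ℝ) / ((j:ℝ)+1) ≤ 1 / ((k:ℝ)+1) := by
      apply one_div_le_one_div_of_le
      · positivity
      · have : k ≤ j := by omega
        have : (k:ℝ) ≤ (j:ℝ) := by exact_mod_cast this
        linarith
    linarith

end GoodSeq

namespace GoodSeq

variable {φ : ℕ → ℝ} {m : ℕ} (gs : GoodSeq φ m)
variable (hpos : ∀ n, 0 < φ n) (hmono : Monotone φ) (hm : 16 ≤ m)

include hpos hmono hm in
lemma Eset_subset_Emax : gs.Eset ⊆ Emax φ := by
  rintro x ⟨b, hb, rfl⟩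
  exact ⟨⟨dval_nonneg, (dval_lt_one (gs.adig_le_one hb) (gs.adig_zeros hpos hm b)).le⟩,
    gs.liminf_zero hpos hmono hm hb, gs.limsup_top hpos hm hb⟩

/-- the map reading off the free digits. -/
noncomputable def gmap (x : ℝ) : ℝ :=
  dval (fun i => dyadicDigit x (Nat.nth gs.FreeP (i-1)))

open scoped Classical in
include hpos hm in
lemma gmap_surj : Set.Ico (0:ℝ) 1 ⊆ gs.gmap '' gs.Eset := by
  intro y hy
  obtain ⟨hy0, hy1⟩ := hy
  set b : ℕ → ℕ := fun p => dyadicDigit y (Nat.count gs.FreeP p + 1) with hbdef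
  have hb : ∀ p, b p ≤ 1 := fun p => ydig_le_one y _
  set X := dval (gs.adig b) with hX
  refine ⟨X, ⟨b, hb, hX⟩, ?_⟩
  have hinf := gs.freeP_infinite hpos hm
  have hdig : ∀ i : ℕ, 1 ≤ i →
      dyadicDigit X (Nat.nth gs.FreeP (i-1)) = dyadicDigit y i := by
    intro i hi
    rw [hX, gs.adig_digit hpos hm hb (Nat.nth_mem_of_infinite hinf (i-1)).1]
    have hPfree : gs.FreeP (Nat.nth gs.FreeP (i-1)) := Nat.nth_mem_of_infinite hinf (i-1)
    obtain ⟨hP1, hPdvd, hPblock⟩ := hPfree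
    rw [adig, if_neg hPblock, if_neg hPdvd, hbdef]
    simp only
    rw [Nat.count_nth_of_infinite hinf]
    congr 1
    omega
  rw [gmap, ← ydval hy0 hy1, dval, dval]
  apply tsum_congr
  intro i
  exact congrArg (fun t : ℕ => (t:ℝ)/2^(i+1)) (hdig (i+1) (by omega))

open scoped Classical in
include hpos hm in
lemma gmap_holder {x x' : ℝ} (hx : x ∈ gs.Eset) (hx' : x' ∈ gs.Eset) :
    |gs.gmap x - gs.gmap x'| ≤ 2^(m+2) * |x - x'| ^ ((1:ℝ) - 2/(m:ℝ)) := by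
  obtain ⟨b, hb, rfl⟩ := hx
  obtain ⟨b', hb', rfl⟩ := hx'
  set α : ℝ := (1:ℝ) - 2/(m:ℝ) with hα
  have hm0 : (0:ℝ) < (m:ℝ) := by
    have : 0 < m := by omega
    exact_mod_cast this
  have hmr : (16:ℝ) ≤ (m:ℝ) := by exact_mod_cast hm
  have hα0 : (0:ℝ) ≤ α := by
    rw [hα, sub_nonneg, div_le_one hm0]
    linarith
  have hα1 : α ≤ 1 := by
    rw [hα]
    have : (0:ℝ) < 2/(m:ℝ) := by positivity
    linarith
  set c := gs.adig b with hc
  set c' := gs.adig b' with hc'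
  have hc1 : ∀ p, c p ≤ 1 := gs.adig_le_one hb
  have hc1' : ∀ p, c' p ≤ 1 := gs.adig_le_one hb'
  have hc0 : ∀ N, ∃ p, N ≤ p ∧ c p = 0 := gs.adig_zeros hpos hm b
  have hc0' : ∀ N, ∃ p, N ≤ p ∧ c' p = 0 := gs.adig_zeros hpos hm b'
  by_cases hcc : ∀ p, c p = c' p
  · have hdv : dval c = dval c' := by
      rw [dval, dval]
      exact tsum_congr (fun i => by rw [hcc])
    rw [hdv, sub_self, abs_zero]
    positivity
  · push_neg at hcc
    set n := Nat.find hcc with hndef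
    have hn : c n ≠ c' n := Nat.find_spec hcc
    have hmin : ∀ p < n, c p = c' p := by
      intro p hp
      by_contra hcon
      exact Nat.find_min hcc (by rw [← hndef]; exact hp) hcon
    have hblock0 : ¬ gs.inBlock 0 := by
      rintro ⟨k, _, h1, h2⟩
      omega
    have hn1 : 1 ≤ n := by
      rcases Nat.eq_zero_or_pos n with h0 | h
      · exfalso
        apply hn
        rw [h0, hc, hc', adig, adig, if_neg hblock0, if_neg hblock0,
          if_pos (dvd_zero m), if_pos (dvd_zero m)]
      · exact h
    set q := m * (n/m + 1) with hqdef
    obtain ⟨t, r, hdr, hrm, hq0⟩ : ∃ t r, t + r = n ∧ r < m ∧ q = t + m :=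
      ⟨m*(n/m), n % m, Nat.div_add_mod _ m, Nat.mod_lt _ (by omega),
        by rw [hqdef, mul_add, mul_one]⟩
    have hqn : n < q ∧ q ≤ n + m := by omega
    have hmdq : m ∣ q := Dvd.intro _ rfl
    have hqeq : c q = c' q := by
      by_cases hbq : gs.inBlock q
      · rw [hc, hc', adig, adig, if_pos hbq, if_pos hbq]
      · rw [hc, hc', adig, adig, if_neg hbq, if_neg hbq, if_pos hmdq, if_pos hmdq]
    -- separation
    have hsep : (1/2:ℝ)^q ≤ |dval c - dval c'| := by
      have h1 := hc1 n
      have h1' := hc1' n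
      rcases Nat.lt_or_ge (c' n) (c n) with hlt | hge
      · have hcn : c n = 1 := by omega
        have hcn' : c' n = 0 := by omega
        have hds := dval_sep hc1 hc1' hc0 hc0' hn1 hqn.1 hmin hcn hcn' hqeq
        have hq2 : (0:ℝ) < (1/2:ℝ)^q := by positivity
        rw [abs_of_nonneg (by linarith)]
        linarith
      · have hlt : c n < c' n := by omega
        have hcn : c' n = 1 := by omega
        have hcn' : c n = 0 := by omega
        have hds := dval_sep hc1' hc1 hc0' hc0 hn1 hqn.1
          (fun p hp => (hmin p hp).symm) hcn hcn' hqeq.symm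
        have hq2 : (0:ℝ) < (1/2:ℝ)^q := by positivity
        rw [abs_sub_comm, abs_of_nonneg (by linarith)]
        linarith
    -- closeness of images
    have hinf := gs.freeP_infinite hpos hm
    set F := Nat.count gs.FreeP n with hF
    have hgd1 : ∀ i, dyadicDigit (dval c) (Nat.nth gs.FreeP (i-1)) ≤ 1 :=
      fun i => ydig_le_one _ _
    have hgd1' : ∀ i, dyadicDigit (dval c') (Nat.nth gs.FreeP (i-1)) ≤ 1 :=
      fun i => ydig_le_one _ _
    have hagree : ∀ j < F, dyadicDigit (dval c) (Nat.nth gs.FreeP ((j+1)-1))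
        = dyadicDigit (dval c') (Nat.nth gs.FreeP ((j+1)-1)) := by
      intro j hj
      have hPn : Nat.nth gs.FreeP j < n := (Nat.lt_nth_iff_count_lt hinf).mp hj
      have hPfree : gs.FreeP (Nat.nth gs.FreeP j) := Nat.nth_mem_of_infinite hinf j
      obtain ⟨hP1, _, _⟩ := hPfree
      simp only [Nat.add_sub_cancel]
      rw [hc, hc', gs.adig_digit hpos hm hb hP1, gs.adig_digit hpos hm hb' hP1]
      exact hmin _ hPn
    have hclose : |gs.gmap (dval c) - gs.gmap (dval c')| ≤ (1/2:ℝ)^F := by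
      rw [gmap, gmap]
      exact dval_close hgd1 hgd1' hagree
    -- counting
    have hcount := gs.count_free_ge hpos hm n
    -- final chain
    have hu0 : (0:ℝ) < |dval c - dval c'| := lt_of_lt_of_le (by positivity) hsep
    have hstep1 : ((1/2:ℝ)^(n+m)) ≤ |dval c - dval c'| := by
      refine le_trans ?_ hsep
      apply pow_le_pow_of_le_one (by norm_num) (by norm_num)
      omega
    have hb2 : ((1/2:ℝ)^(n+m)) ^ α ≤ |dval c - dval c'| ^ α :=
      Real.rpow_le_rpow (by positivity) hstep1 hα0
    have hb3 : ((1/2:ℝ)^(n+m)) ^ α = (1/2:ℝ) ^ (((n:ℝ)+(m:ℝ)) * α) := by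
      rw [← Real.rpow_natCast (1/2:ℝ) (n+m), ← Real.rpow_mul (by norm_num)]
      push_cast
      ring_nf
    have hexp : ((n:ℝ)+(m:ℝ)) * α - ((m:ℝ)+2) ≤ (F:ℝ) := by
      have hprod : (m:ℝ) * α ≤ (m:ℝ) * 1 := mul_le_mul_of_nonneg_left hα1 (le_of_lt hm0)
      have : α * (n:ℝ) - 2 ≤ (F:ℝ) := by
        rw [hα]
        exact le_trans (le_of_eq (by ring)) hcount
      nlinarith
    have hfinal : (1/2:ℝ)^F ≤ 2^(m+2) * (1/2:ℝ) ^ (((n:ℝ)+(m:ℝ)) * α) := by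
      have h2m : (2:ℝ)^(m+2) = (1/2:ℝ) ^ (-((m:ℝ)+2)) := by
        rw [one_div, Real.inv_rpow (by norm_num : (0:ℝ) ≤ 2),
          ← Real.rpow_neg (by norm_num : (0:ℝ) ≤ 2), neg_neg,
          ← Real.rpow_natCast (2:ℝ) (m+2)]
        congr 1
        push_cast
        ring
      rw [h2m, ← Real.rpow_add (by norm_num : (0:ℝ) < 1/2)]
      rw [← Real.rpow_natCast (1/2:ℝ) F]
      apply Real.rpow_le_rpow_of_exponent_ge (by norm_num) (by norm_num)
      linarith
    calc |gs.gmap (dval c) - gs.gmap (dval c')| ≤ (1/2:ℝ)^F := hclose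
      _ ≤ 2^(m+2) * (1/2:ℝ) ^ (((n:ℝ)+(m:ℝ)) * α) := hfinal
      _ = 2^(m+2) * ((1/2:ℝ)^(n+m)) ^ α := by rw [hb3]
      _ ≤ 2^(m+2) * |dval c - dval c'| ^ α := by
          apply mul_le_mul_of_nonneg_left hb2 (by positivity)

end GoodSeq

theorem dimH_Emax_eq_one (φ : ℕ → ℝ) (hpos : ∀ n, 0 < φ n) (hmono : Monotone φ)
    (htends : Tendsto φ atTop atTop)
    (hlimsup : atTop.limsup (fun n : ℕ => (((n : ℝ) / φ n : ℝ) : EReal)) = ⊤) :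
    dimH (Emax φ) = 1 := by
  have hupper : dimH (Emax φ) ≤ 1 := by
    calc dimH (Emax φ) ≤ dimH (Set.univ : Set ℝ) := dimH_mono (subset_univ _)
      _ = 1 := Real.dimH_univ
  have hlower : ∀ m : ℕ, 16 ≤ m → ((1 - 2/(m:ℝ≥0) : ℝ≥0) : ℝ≥0∞) ≤ dimH (Emax φ) := by
    intro m hm
    obtain ⟨gs⟩ := goodSeq_exists hpos htends hlimsup m
    set r : ℝ≥0 := 1 - 2/(m:ℝ≥0) with hr
    have hm0 : (0:ℝ≥0) < (m:ℝ≥0) := by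
      have : 0 < m := by omega
      exact_mod_cast this
    have h2m1 : (2:ℝ≥0)/(m:ℝ≥0) ≤ 1 := by
      rw [div_le_one hm0]
      have : (2:ℕ) ≤ m := by omega
      exact_mod_cast this
    have hrpos : 0 < r := by
      rw [hr, tsub_pos_iff_lt, div_lt_one hm0]
      have : (2:ℕ) < m := by omega
      exact_mod_cast this
    have hrle : (r:ℝ) = 1 - 2/(m:ℝ) := by
      rw [hr, NNReal.coe_sub h2m1]
      push_cast
      ring
    have hα0' : (0:ℝ) ≤ 1 - 2/(m:ℝ) := by
      rw [← hrle]
      exact r.coe_nonneg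
    have hholder : HolderOnWith ((2:ℝ≥0)^(m+2)) r gs.gmap gs.Eset := by
      intro x hx y hy
      have h := gs.gmap_holder hpos hm hx hy
      rw [edist_dist, edist_dist, Real.dist_eq, Real.dist_eq]
      calc ENNReal.ofReal |gs.gmap x - gs.gmap y|
          ≤ ENNReal.ofReal (2^(m+2) * |x - y| ^ ((1:ℝ) - 2/(m:ℝ))) :=
            ENNReal.ofReal_le_ofReal h
        _ = ENNReal.ofReal (2^(m+2)) * ENNReal.ofReal (|x-y| ^ ((1:ℝ)-2/(m:ℝ))) :=
            ENNReal.ofReal_mul (by positivity)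
        _ = (((2:ℝ≥0)^(m+2) : ℝ≥0) : ℝ≥0∞) * ENNReal.ofReal |x-y| ^ ((r:ℝ)) := by
            rw [hrle, ← ENNReal.ofReal_rpow_of_nonneg (abs_nonneg _) hα0']
            congr 1
            rw [ENNReal.ofReal_pow (by norm_num)]
            push_cast
            norm_num
    have himg := hholder.dimH_image_le hrpos
    have hico : dimH (Set.Ico (0:ℝ) 1) = 1 := by
      rw [Real.dimH_of_nonempty_interior (by
        rw [interior_Ico]
        exact ⟨1/2, by norm_num⟩), Module.finrank_self, Nat.cast_one]
    have h1 : (1:ℝ≥0∞) ≤ dimH gs.Eset / (r:ℝ≥0∞) := by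
      rw [← hico]
      exact le_trans (dimH_mono (gs.gmap_surj hpos hm)) himg
    have h2 : ((r:ℝ≥0) : ℝ≥0∞) ≤ dimH gs.Eset := by
      have h3 := (ENNReal.le_div_iff_mul_le
        (Or.inl (by exact_mod_cast hrpos.ne'))
        (Or.inl ENNReal.coe_ne_top)).mp h1
      simpa using h3
    exact le_trans h2 (dimH_mono (gs.Eset_subset_Emax hpos hmono hm))
  refine le_antisymm hupper ?_
  apply ENNReal.le_of_forall_pos_le_add
  intro ε hε _
  obtain ⟨M, hM⟩ := exists_nat_gt (2/(ε:ℝ))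
  set m := max M 16 with hmdef
  have hm : 16 ≤ m := le_max_right _ _
  have hlow := hlower m hm
  have hm0 : (0:ℝ) < (m:ℝ) := by
    have : 0 < m := by omega
    exact_mod_cast this
  have hε' : (0:ℝ) < (ε:ℝ) := hε
  have h2mε : (2:ℝ≥0)/(m:ℝ≥0) ≤ ε := by
    rw [← NNReal.coe_le_coe]
    push_cast
    rw [div_le_iff₀ hm0]
    have hMm : (M:ℝ) ≤ (m:ℝ) := by
      have : M ≤ m := le_max_left _ _
      exact_mod_cast this
    have h1 : 2/(ε:ℝ) < (m:ℝ) := lt_of_lt_of_le hM hMm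
    have h2 : (2:ℝ) = (2/(ε:ℝ)) * ε := by
      field_simp
    nlinarith
  have h2m1 : (2:ℝ≥0)/(m:ℝ≥0) ≤ 1 := by
    apply div_le_one_of_le₀
    · have : (2:ℕ) ≤ m := by omega
      exact_mod_cast this
    · exact (m:ℝ≥0).coe_nonneg
  have hkey : (1:ℝ≥0) ≤ (1 - 2/(m:ℝ≥0)) + ε := by
    calc (1:ℝ≥0) = (1 - 2/(m:ℝ≥0)) + 2/(m:ℝ≥0) := (tsub_add_cancel_of_le h2m1).symm
      _ ≤ (1 - 2/(m:ℝ≥0)) + ε := add_le_add_right h2mε _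
  calc (1:ℝ≥0∞) ≤ (((1 - 2/(m:ℝ≥0)) : ℝ≥0) : ℝ≥0∞) + ((ε:ℝ≥0) : ℝ≥0∞) := by
        exact_mod_cast hkey
    _ ≤ dimH (Emax φ) + ε := add_le_add_left hlow _
end

section
/- Equip Σ^∞ = {0,1}^ℕ with the metric d(x,y) = 2^{−min{k : x_{k+1} ≠ y_{k+1}}}. For ω ∈ Σ^∞ and n ≥ 1 let r_n(ω) denote the length of the longest run of 1's in (ω_1,…,ω_n). Let φ : ℕ → (0,∞) be monotonically increasing with φ(n) → ∞ and limsup_{n→∞} n/φ(n) = +∞. Then the set {ω ∈ Σ^∞ : liminf_{n→∞} r_n(ω)/φ(n) = 0 and limsup_{n→∞} r_n(ω)/φ(n) = +∞} contains a dense G_δ subset of Σ^∞ (in particular it is residual in Σ^∞). -/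
open Filter

/-- The run-length function on binary sequences: `seqRunLen ω n` is the length of the
longest run of `1`'s among the first `n` terms `ω_1, …, ω_n` (here `ω i` is the term
`ω_{i+1}`, i.e. sequences are indexed from `0`). -/
noncomputable def seqRunLen (ω : ℕ → Fin 2) (n : ℕ) : ℕ :=
  sSup {ℓ : ℕ | ∃ i, i + ℓ ≤ n ∧ ∀ j < ℓ, ω (i + j) = 1}

lemma seqRunLen_set_bdd (ω : ℕ → Fin 2) (n : ℕ) :
    {ℓ : ℕ | ∃ i, i + ℓ ≤ n ∧ ∀ j < ℓ, ω (i + j) = 1} ⊆ Set.Iic n := by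
  rintro ℓ ⟨i, hi, -⟩; simp only [Set.mem_Iic]; omega

lemma seqRunLen_le (ω : ℕ → Fin 2) (n : ℕ) : seqRunLen ω n ≤ n :=
  csSup_le ⟨0, 0, by omega, by omega⟩ (fun ℓ hℓ => seqRunLen_set_bdd ω n hℓ)

lemma le_seqRunLen {ω : ℕ → Fin 2} {n a b : ℕ} (hb : b ≤ n)
    (h : ∀ j, a ≤ j → j < b → ω j = 1) : b - a ≤ seqRunLen ω n := by
  rcases le_or_gt b a with hba | hba
  · simp [Nat.sub_eq_zero_of_le hba]
  apply le_csSup ((Set.finite_Iic n).subset (seqRunLen_set_bdd ω n)).bddAbove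
  exact ⟨a, by omega, fun j hj => h (a + j) (by omega) (by omega)⟩

lemma seqRunLen_congr {ω ω' : ℕ → Fin 2} {n : ℕ} (h : ∀ i < n, ω i = ω' i) :
    seqRunLen ω n = seqRunLen ω' n := by
  unfold seqRunLen
  congr 1
  ext ℓ
  constructor <;> rintro ⟨i, hi, hall⟩ <;> refine ⟨i, hi, fun j hj => ?_⟩
  · rw [← h (i + j) (by omega)]; exact hall j hj
  · rw [h (i + j) (by omega)]; exact hall j hj

lemma seqRunLen_le_of_zero {ω : ℕ → Fin 2} {N : ℕ} (h : ∀ j, N ≤ j → ω j = 0) (n : ℕ) :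
    seqRunLen ω n ≤ N := by
  refine csSup_le ⟨0, 0, by omega, by omega⟩ ?_
  rintro ℓ ⟨i, hi, hall⟩
  rcases Nat.eq_zero_or_pos ℓ with h0 | h0
  · omega
  by_contra hlt
  have h1 : ω (i + (ℓ - 1)) = 1 := hall (ℓ - 1) (by omega)
  rcases lt_or_ge (i + (ℓ - 1)) N with hc | hc
  · omega
  · rw [h _ hc] at h1; exact absurd h1 (by decide)

lemma isOpen_runLen (n : ℕ) (P : ℕ → Prop) : IsOpen {ω : ℕ → Fin 2 | P (seqRunLen ω n)} := by
  rw [isOpen_iff_mem_nhds]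
  intro ω hω
  have hopen : IsOpen ((↑(Finset.range n) : Set ℕ).pi (fun i => {ω i})) :=
    isOpen_set_pi (Finset.finite_toSet _) (fun a _ => isOpen_discrete _)
  refine Filter.mem_of_superset (hopen.mem_nhds ?_) ?_
  · intro i _; rfl
  · intro ω' hω'
    have : seqRunLen ω' n = seqRunLen ω n := seqRunLen_congr (fun i hi => by
      exact (hω' i (by simpa using hi)))
    simpa [Set.mem_setOf_eq, this] using hω

/-- From an open set, extract a cylinder. -/
lemma exists_cyl {U : Set (ℕ → Fin 2)} (hU : IsOpen U) {x : ℕ → Fin 2} (hx : x ∈ U) :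
    ∃ N, ∀ ω : ℕ → Fin 2, (∀ i < N, ω i = x i) → ω ∈ U := by
  obtain ⟨I, u, hIu, hsub⟩ := isOpen_pi_iff.mp hU x hx
  refine ⟨I.sup id + 1, fun ω hω => hsub ?_⟩
  intro i hi
  have : i < I.sup id + 1 := Nat.lt_succ_of_le (Finset.le_sup (f := id) hi)
  rw [hω i this]
  exact (hIu i hi).2

theorem residual_seq_Emax (φ : ℕ → ℝ) (hpos : ∀ n, 0 < φ n) (hmono : Monotone φ)
    (htends : Tendsto φ atTop atTop)
    (hlimsup : atTop.limsup (fun n : ℕ => (((n : ℝ) / φ n : ℝ) : EReal)) = ⊤) :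
    (∃ G : Set (ℕ → Fin 2), IsGδ G ∧ Dense G ∧
      G ⊆ {ω | atTop.liminf (fun n => ((seqRunLen ω n / φ n : ℝ) : EReal)) = 0 ∧
              atTop.limsup (fun n => ((seqRunLen ω n / φ n : ℝ) : EReal)) = ⊤}) ∧
    {ω : ℕ → Fin 2 | atTop.liminf (fun n => ((seqRunLen ω n / φ n : ℝ) : EReal)) = 0 ∧
        atTop.limsup (fun n => ((seqRunLen ω n / φ n : ℝ) : EReal)) = ⊤} ∈
      residual (ℕ → Fin 2) := by
  set T := {ω : ℕ → Fin 2 | atTop.liminf (fun n => ((seqRunLen ω n / φ n : ℝ) : EReal)) = 0 ∧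
        atTop.limsup (fun n => ((seqRunLen ω n / φ n : ℝ) : EReal)) = ⊤} with hT
  set U : ℕ → Set (ℕ → Fin 2) :=
    fun m => {ω | ∃ n, m ≤ n ∧ (m : ℝ) < (seqRunLen ω n : ℝ) / φ n} with hU
  set V : ℕ → Set (ℕ → Fin 2) :=
    fun m => {ω | ∃ n, m ≤ n ∧ (seqRunLen ω n : ℝ) / φ n < 1 / (m + 1)} with hV
  have hUopen : ∀ m, IsOpen (U m) := by
    intro m
    have : U m = ⋃ n, {ω | m ≤ n ∧ (m : ℝ) < (seqRunLen ω n : ℝ) / φ n} := by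
      ext ω; simp [hU, Set.mem_iUnion]
    rw [this]
    exact isOpen_iUnion fun n => isOpen_runLen n (fun k => m ≤ n ∧ (m : ℝ) < (k : ℝ) / φ n)
  have hVopen : ∀ m, IsOpen (V m) := by
    intro m
    have : V m = ⋃ n, {ω | m ≤ n ∧ (seqRunLen ω n : ℝ) / φ n < 1 / (m + 1)} := by
      ext ω; simp [hV, Set.mem_iUnion]
    rw [this]
    exact isOpen_iUnion fun n => isOpen_runLen n (fun k => m ≤ n ∧ (k : ℝ) / φ n < 1 / (m + 1))
  -- frequently large n/φ n
  have hfreq : ∀ K : ℝ, ∀ m₀ : ℕ, ∃ n, m₀ ≤ n ∧ K < (n : ℝ) / φ n := by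
    intro K m₀
    have h1 : ((K : EReal)) < atTop.limsup (fun n : ℕ => (((n : ℝ) / φ n : ℝ) : EReal)) := by
      rw [hlimsup]; exact EReal.coe_lt_top K
    have h2 := frequently_lt_of_lt_limsup (by isBoundedDefault) h1
    obtain ⟨n, hn, hlt⟩ := frequently_atTop.mp h2 m₀
    exact ⟨n, hn, by exact_mod_cast hlt⟩
  have hUdense : ∀ m, Dense (U m) := by
    intro m
    rw [dense_iff_inter_open]
    rintro W hW ⟨x, hx⟩
    obtain ⟨N, hN⟩ := exists_cyl hW hx
    obtain ⟨n, hn, hlt⟩ := hfreq (2 * m + 2) (max m (2 * N))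
    set ω : ℕ → Fin 2 := fun i => if i < N then x i else 1 with hω
    refine ⟨ω, hN ω (fun i hi => by simp [hω, hi]), n, le_trans (le_max_left _ _) hn, ?_⟩
    have hrun : n - N ≤ seqRunLen ω n :=
      le_seqRunLen le_rfl (fun j hj _ => by simp [hω, Nat.not_lt.mpr hj])
    have h2N : 2 * N ≤ n := le_trans (le_max_right _ _) hn
    have hnr : (n : ℝ) ≤ 2 * (seqRunLen ω n : ℝ) := by
      have : n ≤ 2 * seqRunLen ω n := by omega
      exact_mod_cast this
    have hφ := hpos n
    rw [lt_div_iff₀ hφ]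
    have hlt' : (2 * (m : ℝ) + 2) * φ n < n := (lt_div_iff₀ hφ).mp hlt
    nlinarith
  have hVdense : ∀ m, Dense (V m) := by
    intro m
    rw [dense_iff_inter_open]
    rintro W hW ⟨x, hx⟩
    obtain ⟨N, hN⟩ := exists_cyl hW hx
    obtain ⟨n, ⟨hφn, hn⟩⟩ :=
      ((htends.eventually_gt_atTop (((m : ℝ) + 1) * ((N : ℝ) + 1))).and
        (eventually_ge_atTop m)).exists
    set ω : ℕ → Fin 2 := fun i => if i < N then x i else 0 with hω
    refine ⟨ω, hN ω (fun i hi => by simp [hω, hi]), n, hn, ?_⟩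
    have hr : (seqRunLen ω n : ℝ) ≤ N := by
      exact_mod_cast seqRunLen_le_of_zero (fun j hj => by simp [hω, Nat.not_lt.mpr hj]) n
    have hφ := hpos n
    rw [div_lt_div_iff₀ hφ (by positivity)]
    nlinarith
  -- the Gδ set
  set G : Set (ℕ → Fin 2) := (⋂ m, U m) ∩ ⋂ m, V m with hG
  have hGδ : IsGδ G :=
    (IsGδ.iInter fun m => (hUopen m).isGδ).inter (IsGδ.iInter fun m => (hVopen m).isGδ)
  have hGres : G ∈ residual (ℕ → Fin 2) := by
    refine Filter.inter_mem ?_ ?_ <;> rw [countable_iInter_mem] <;> intro m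
    exacts [residual_of_dense_open (hUopen m) (hUdense m),
      residual_of_dense_open (hVopen m) (hVdense m)]
  haveI : BaireSpace (ℕ → Fin 2) := BaireSpace.of_t2Space_locallyCompactSpace
  have hGdense : Dense G := dense_of_mem_residual hGres
  have hGsub : G ⊆ T := by
    rintro ω ⟨hωU, hωV⟩
    simp only [Set.mem_iInter] at hωU hωV
    constructor
    · -- liminf = 0
      refine le_antisymm ?_ ?_
      · by_contra hcon
        have h0 : (0 : EReal) <
            atTop.liminf (fun n => ((seqRunLen ω n / φ n : ℝ) : EReal)) := not_le.mp hcon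
        obtain ⟨y, hy0, hy⟩ := EReal.exists_between_coe_real h0
        have hy0' : (0 : ℝ) < y := by exact_mod_cast hy0
        obtain ⟨m, hm⟩ := exists_nat_one_div_lt hy0'
        have hle : atTop.liminf (fun n => ((seqRunLen ω n / φ n : ℝ) : EReal)) ≤
            ((1 / ((m : ℝ) + 1) : ℝ) : EReal) := by
          refine liminf_le_of_frequently_le ?_
          rw [frequently_atTop]
          intro m₀
          obtain ⟨n, hn, hval⟩ := hωV (max m m₀)
          refine ⟨n, le_trans (le_max_right _ _) hn, ?_⟩
          rw [EReal.coe_le_coe_iff]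
          refine le_trans hval.le ?_
          have h1 : (m : ℝ) + 1 ≤ (max m m₀ : ℕ) + 1 := by
            have : (m : ℝ) ≤ (max m m₀ : ℕ) := by exact_mod_cast le_max_left m m₀
            linarith
          exact div_le_div_of_nonneg_left one_pos.le (by positivity) h1
        have : ((1 / ((m : ℝ) + 1) : ℝ) : EReal) < (y : EReal) := by
          exact_mod_cast hm
        exact absurd (lt_of_le_of_lt (le_trans hy.le hle) this) (lt_irrefl _)
      · refine le_liminf_of_le (by isBoundedDefault) ?_
        filter_upwards with n
        have : (0 : ℝ) ≤ (seqRunLen ω n : ℝ) / φ n := div_nonneg (Nat.cast_nonneg _) (hpos n).le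
        exact_mod_cast EReal.coe_le_coe_iff.mpr this
    · -- limsup = ⊤
      by_contra hne
      have hlt : atTop.limsup (fun n => ((seqRunLen ω n / φ n : ℝ) : EReal)) < ⊤ :=
        lt_top_iff_ne_top.mpr hne
      obtain ⟨y, hy1, -⟩ := EReal.exists_between_coe_real hlt
      obtain ⟨m₁, hm₁⟩ := exists_nat_ge y
      have : (y : EReal) ≤ atTop.limsup (fun n => ((seqRunLen ω n / φ n : ℝ) : EReal)) := by
        refine le_limsup_of_frequently_le ?_
        rw [frequently_atTop]
        intro m₀
        obtain ⟨n, hn, hval⟩ := hωU (max m₁ m₀)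
        refine ⟨n, le_trans (le_max_right _ _) hn, ?_⟩
        rw [EReal.coe_le_coe_iff]
        refine le_trans ?_ hval.le
        exact le_trans hm₁ (by exact_mod_cast le_max_left m₁ m₀)
      exact absurd (lt_of_le_of_lt this hy1) (lt_irrefl _)
  exact ⟨⟨G, hGδ, hGdense, hGsub⟩, Filter.mem_of_superset hGres hGsub⟩
end
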